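/- Let p, q, u, v ∈ ℂ and set N(u,v) = (1−q)u + q − p + (p−1)v and D(u,v) = q(1−p)u + p(q−1)v + (p−q)uv. Suppose D(u,v) ≠ 0 and define U = p·v·N(u,v)/D(u,v) and V = q·u·N(u,v)/D(u,v) (the map F_I). Then the following three identities hold: (i) q·u·U = p·v·V; (ii) (q−1)(U−1)(u−1) = (p−1)(V−1)(v−1); (iii) q(q−1)(U−p)(u−p) = p(p−1)(V−q)(v−q). These are the exponentiated forms of the three alternating invariants with separated variables of F_I. -/

import Mathlib

/-- Exponentiated alternating invariants with separated variables of the map F_I. -/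
theorem stmt_17 (p q u v U V : ℂ)
    (hD : q * (1 - p) * u + p * (q - 1) * v + (p - q) * u * v ≠ 0)
    (hU : U = p * v * ((1 - q) * u + q - p + (p - 1) * v) /
      (q * (1 - p) * u + p * (q - 1) * v + (p - q) * u * v))
    (hV : V = q * u * ((1 - q) * u + q - p + (p - 1) * v) /
      (q * (1 - p) * u + p * (q - 1) * v + (p - q) * u * v)) :
    q * u * U = p * v * V ∧
    (q - 1) * (U - 1) * (u - 1) = (p - 1) * (V - 1) * (v - 1) ∧
    q * (q - 1) * (U - p) * (u - p) = p * (p - 1) * (V - q) * (v - q) := by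
  subst hU hV
  rw [div_sub' hD, div_sub' hD, div_sub' hD, div_sub' hD]
  refine ⟨?_, ?_, ?_⟩ <;> field_simp <;> ring
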